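/- arXiv:2005.02904 — 3 statements merged into one kernel-verified Lean document; each statement's English description precedes it below -/
import Mathlib

section
/- Let Γ be a finite group acting by automorphisms on a group H, let K be a Γ-invariant subgroup of H, and set H₀ = H^Γ, K₀ = K^Γ. Let w ∈ H₀. If the first nonabelian cohomology set H¹(Γ, K ∩ wKw⁻¹) (with Γ acting on K ∩ wKw⁻¹ by the restricted action) is trivial, then (KwK) ∩ H₀ = K₀ w K₀. -/
/-- Let a finite group Γ act by automorphisms on a group H (via
`φ : Γ →* MulAut H`), let K be a Γ-invariant subgroup, and w a Γ-fixed element.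
If every cocycle of Γ valued in K ∩ wKw⁻¹ is a coboundary (triviality of the
nonabelian H¹), then (KwK) ∩ H^Γ = K^Γ w K^Γ. -/
theorem stmt1 {Γ H : Type} [Group Γ] [Finite Γ] [Group H]
    (φ : Γ →* MulAut H) (K : Subgroup H)
    (hK : ∀ (γ : Γ), ∀ k ∈ K, φ γ k ∈ K)
    (w : H) (hw : ∀ γ : Γ, φ γ w = w)
    (hH1 : ∀ m : Γ → H,
      (∀ γ, m γ ∈ K ∧ w⁻¹ * m γ * w ∈ K) →
      (∀ γ δ, m (γ * δ) = m γ * φ γ (m δ)) →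
      ∃ k : H, (k ∈ K ∧ w⁻¹ * k * w ∈ K) ∧ ∀ γ, m γ = k⁻¹ * φ γ k) :
    ∀ x : H,
      ((∃ a ∈ K, ∃ b ∈ K, x = a * w * b) ∧ (∀ γ, φ γ x = x)) ↔
      (∃ a, (a ∈ K ∧ ∀ γ, φ γ a = a) ∧ ∃ b, (b ∈ K ∧ ∀ γ, φ γ b = b) ∧ x = a * w * b) := by
  intro x
  constructor
  · rintro ⟨⟨a, ha, b, hb, rfl⟩, hx⟩
    have hsub : ∀ γ : Γ, φ γ a = a * w * b * (φ γ b)⁻¹ * w⁻¹ := by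
      intro γ
      have h := hx γ
      simp only [map_mul, hw γ] at h
      rw [← h]; group
    have key : ∀ γ : Γ, w⁻¹ * (a⁻¹ * φ γ a) * w = b * (φ γ b)⁻¹ := by
      intro γ; rw [hsub γ]; group
    have hmem : ∀ γ : Γ, (a⁻¹ * φ γ a) ∈ K ∧ w⁻¹ * (a⁻¹ * φ γ a) * w ∈ K := by
      intro γ
      refine ⟨K.mul_mem (K.inv_mem ha) (hK γ a ha), ?_⟩
      rw [key γ]
      exact K.mul_mem hb (K.inv_mem (hK γ b hb))
    have hcoc : ∀ γ δ : Γ, a⁻¹ * φ (γ * δ) a = (a⁻¹ * φ γ a) * φ γ (a⁻¹ * φ δ a) := by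
      intro γ δ
      simp only [map_mul, map_inv, MulAut.mul_apply]
      group
    obtain ⟨k, ⟨hk, hwk⟩, hkco⟩ := hH1 (fun γ => a⁻¹ * φ γ a) hmem hcoc
    have hsub2 : ∀ γ : Γ, φ γ a = a * k⁻¹ * φ γ k := by
      intro γ
      have := hkco γ
      have : φ γ a = a * (a⁻¹ * φ γ a) := by group
      rw [this, hkco γ]; group
    have hfix : ∀ γ : Γ, φ γ (a * k⁻¹) = a * k⁻¹ := by
      intro γ
      rw [map_mul, map_inv, hsub2 γ]; group
    refine ⟨a * k⁻¹, ⟨K.mul_mem ha (K.inv_mem hk), hfix⟩,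
      (w⁻¹ * k * w) * b, ⟨K.mul_mem hwk hb, ?_⟩, by group⟩
    intro γ
    have hx' : (a * k⁻¹) * w * ((w⁻¹ * k * w) * b) = a * w * b := by group
    have h := hx γ
    rw [← hx'] at h
    simp only [map_mul, hw γ, hfix γ] at h
    have h2 := mul_left_cancel h
    simpa [map_mul, map_inv, hw γ] using h2
  · rintro ⟨a, ⟨ha, hfa⟩, b, ⟨hb, hfb⟩, rfl⟩
    exact ⟨⟨a, ha, b, hb, rfl⟩, fun γ => by simp [map_mul, hw γ, hfa γ, hfb γ]⟩
end

section
/- Let G be a locally profinite group, J an open compact subgroup, (λ, W) a smooth finite-dimensional representation of J. Suppose (π, V) is a smooth irreducible representation of G such that Hom_J(λ, V) is one-dimensional, and let χ be the associated character of the Hecke algebra H_λ acting on Hom_J(λ, V). Then the space _χH̄_λ = {Ψ ∈ H̄_λ : φ ⋆ Ψ = χ(φ)Ψ for all φ ∈ H_λ} has dimension at most 1 over ℂ. -/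
open Module

/-- The transpose `ᵗa ∈ End(W)` of `a ∈ End(W̃)`, `W` finite-dimensional. -/
noncomputable def transp {W : Type} [AddCommGroup W] [Module ℂ W] [FiniteDimensional ℂ W]
    (a : Dual ℂ W →ₗ[ℂ] Dual ℂ W) : W →ₗ[ℂ] W :=
  (Module.evalEquiv ℂ W).symm.toLinearMap ∘ₗ a.dualMap ∘ₗ (Module.evalEquiv ℂ W).toLinearMap

/-- The space `Hom_J(λ, π)` of `J`-intertwiners `W → V`. -/
def intertwiners {G : Type} [Group G] {J : Subgroup G}
    {W : Type} [AddCommGroup W] [Module ℂ W] (lam : Representation ℂ J W)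
    {V : Type} [AddCommGroup V] [Module ℂ V] (π : Representation ℂ G V) :
    Submodule ℂ (W →ₗ[ℂ] V) where
  carrier := {T | ∀ (j : J) (w : W), T (lam j w) = π (j : G) (T w)}
  add_mem' := by intro a b ha hb j w; simp [ha j w, hb j w]
  zero_mem' := by intro j w; simp
  smul_mem' := by intro c T hT j w; simp [hT j w]

/-- Only finitely many right `J`-cosets meet a double coset `JhJ`, when `J` is
compact open. Stated via `Quotient.out` representatives. -/
theorem stmt10_aux_qfin {G : Type} [Group G] [TopologicalSpace G] [IsTopologicalGroup G]
    (J : Subgroup G) (hJopen : IsOpen (J : Set G)) (hJcpt : IsCompact (J : Set G)) (h : G) :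
    {r : Quotient (QuotientGroup.rightRel J) |
      ∃ p : J × J, (p.1 : G) * h * (p.2 : G) = Quotient.out r}.Finite := by
  classical
  have hS : IsCompact ((fun p : G × G => p.1 * h * p.2) '' ((J : Set G) ×ˢ (J : Set G))) :=
    (hJcpt.prod hJcpt).image (by fun_prop)
  have hUopen : ∀ x : G, IsOpen {y : G | y * x⁻¹ ∈ J} :=
    fun x => hJopen.preimage (continuous_mul_right x⁻¹)
  have hcover : ((fun p : G × G => p.1 * h * p.2) '' ((J : Set G) ×ˢ (J : Set G))) ⊆
      ⋃ x : G, {y : G | y * x⁻¹ ∈ J} := by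
    intro y _
    exact Set.mem_iUnion.2 ⟨y, by simp [J.one_mem]⟩
  obtain ⟨t, ht⟩ := hS.elim_finite_subcover _ hUopen hcover
  have hsub : {r : Quotient (QuotientGroup.rightRel J) |
      ∃ p : J × J, (p.1 : G) * h * (p.2 : G) = Quotient.out r} ⊆
      ⋃ i ∈ t, {Quotient.mk (QuotientGroup.rightRel J) i} := by
    rintro r ⟨p, hp⟩
    have hmem : Quotient.out r ∈
        (fun p : G × G => p.1 * h * p.2) '' ((J : Set G) ×ˢ (J : Set G)) :=
      ⟨((p.1 : G), (p.2 : G)), ⟨p.1.2, p.2.2⟩, hp⟩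
    have := ht hmem
    rw [Set.mem_iUnion₂] at this ⊢
    obtain ⟨i, hit, hi⟩ := this
    refine ⟨i, hit, ?_⟩
    have hrel : QuotientGroup.rightRel J i (Quotient.out r) :=
      QuotientGroup.rightRel_apply.mpr hi
    have : Quotient.mk (QuotientGroup.rightRel J) i
        = Quotient.mk (QuotientGroup.rightRel J) (Quotient.out r) := Quotient.sound hrel
    simp [this, Quotient.out_eq]
  exact Set.Finite.subset (t.finite_toSet.biUnion fun i _ => Set.finite_singleton _) hsub

/-- If `lam` acts trivially on a finite-dimensional `W` via `n`, its dual acts trivially. -/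
theorem stmt10_aux_dual_one {G : Type} [Group G] {J : Subgroup G}
    {W : Type} [AddCommGroup W] [Module ℂ W]
    (lam : Representation ℂ J W) (n : J) (hn : lam n = 1) : lam.dual n = 1 := by
  have hn' : lam n⁻¹ = 1 := by
    have : lam n⁻¹ * lam n = 1 := by rw [← map_mul, inv_mul_cancel, map_one]
    rwa [hn, mul_one] at this
  ext f w
  simp [Representation.dual_apply, Module.Dual.transpose_apply, hn']

/-- The range of the dual representation is finite, for a smooth finite-dimensional
representation of a compact group. -/
theorem stmt10_aux_rangefin {G : Type} [Group G] [TopologicalSpace G] [IsTopologicalGroup G]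
    (J : Subgroup G) (hJcpt : IsCompact (J : Set G))
    {W : Type} [AddCommGroup W] [Module ℂ W] [FiniteDimensional ℂ W]
    (lam : Representation ℂ J W)
    (hlamsmooth : ∀ w : W, IsOpen {j : J | lam j w = w}) :
    (Set.range fun j : J => lam.dual j).Finite := by
  classical
  haveI : CompactSpace J := isCompact_iff_compactSpace.mp hJcpt
  set b := Module.finBasis ℂ W with hb
  set O : Set J := ⋂ i, {j : J | lam j (b i) = b i} with hO
  have hOopen : IsOpen O := isOpen_iInter_of_finite fun i => hlamsmooth (b i)
  have hOone : (1 : J) ∈ O := by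
    simp [hO, Set.mem_iInter]
  have hOtriv : ∀ n ∈ O, lam n = 1 := by
    intro n hn
    apply b.ext
    intro i
    have := Set.mem_iInter.mp hn i
    simpa using this
  have hcover : (Set.univ : Set J) ⊆ ⋃ j₀ : J, (fun n => j₀ * n) '' O := by
    intro j _
    exact Set.mem_iUnion.2 ⟨j, ⟨1, hOone, by simp⟩⟩
  obtain ⟨t, ht⟩ := isCompact_univ.elim_finite_subcover _
    (fun j₀ : J => (Homeomorph.mulLeft j₀).isOpen_image.mpr hOopen) hcover
  apply Set.Finite.subset (t.finite_toSet.image fun j : J => lam.dual j)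
  rintro c ⟨j, rfl⟩
  have := ht (Set.mem_univ j)
  rw [Set.mem_iUnion₂] at this
  obtain ⟨j₀, hj₀t, n, hnO, hn⟩ := this
  refine ⟨j₀, hj₀t, ?_⟩
  have hj : j₀ * n = j := hn
  show lam.dual j₀ = lam.dual j
  rw [← hj, map_mul, stmt10_aux_dual_one lam n (hOtriv n hnO), mul_one]

/-- Nondegeneracy of the trace pairing on `End(W̃)`. -/
theorem stmt10_aux_tracend {W : Type} [AddCommGroup W] [Module ℂ W] [FiniteDimensional ℂ W]
    (M : Dual ℂ W →ₗ[ℂ] Dual ℂ W)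
    (hM : ∀ c : Dual ℂ W →ₗ[ℂ] Dual ℂ W,
      LinearMap.trace ℂ (Dual ℂ W) (c ∘ₗ M) = 0) : M = 0 := by
  refine LinearMap.ext fun u => ?_
  rw [LinearMap.zero_apply, ← Module.forall_dual_apply_eq_zero_iff ℂ]
  intro ξ
  have key := hM (dualTensorHom ℂ (Dual ℂ W) (Dual ℂ W) (ξ ⊗ₜ u))
  have hcomp : dualTensorHom ℂ (Dual ℂ W) (Dual ℂ W) (ξ ⊗ₜ u) ∘ₗ M
      = dualTensorHom ℂ (Dual ℂ W) (Dual ℂ W) ((ξ ∘ₗ M) ⊗ₜ u) := by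
    ext x
    simp [dualTensorHom_apply]
  rw [hcomp, LinearMap.trace_eq_contract_apply, contractLeft_apply] at key
  exact key

section Stmt10Aux
open Classical

variable {G : Type} [Group G] {J : Subgroup G}
variable {W : Type} [AddCommGroup W] [Module ℂ W]

/-- The canonical test function in the Hecke algebra supported on the double coset `JhJ`,
with prescribed value `a` at `h`. -/
noncomputable def stmt10_tf (lam : Representation ℂ J W) (h : G)
    (a : Dual ℂ W →ₗ[ℂ] Dual ℂ W) : G → (Dual ℂ W →ₗ[ℂ] Dual ℂ W) :=
  fun x =>
    if hx : ∃ p : J × J, (p.1 : G) * h * (p.2 : G) = x then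
      lam.dual hx.choose.1 ∘ₗ a ∘ₗ lam.dual hx.choose.2
    else 0

theorem stmt10_tf_zero (lam : Representation ℂ J W) (h : G)
    (a : Dual ℂ W →ₗ[ℂ] Dual ℂ W) (x : G)
    (hx : ¬∃ p : J × J, (p.1 : G) * h * (p.2 : G) = x) : stmt10_tf lam h a x = 0 := by
  rw [stmt10_tf, dif_neg hx]

/-- conjugation-compatibility helper -/
theorem stmt10_conj (lam : Representation ℂ J W) (u v : J)
    (c d : Dual ℂ W →ₗ[ℂ] Dual ℂ W)
    (hcd : lam.dual u ∘ₗ c ∘ₗ lam.dual v = d) (u' v' : J) :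
    lam.dual (u' * u) ∘ₗ c ∘ₗ lam.dual (v * v') = lam.dual u' ∘ₗ d ∘ₗ lam.dual v' := by
  subst hcd
  simp only [map_mul, ← Module.End.mul_eq_comp, mul_assoc]

theorem stmt10_tf_spec (lam : Representation ℂ J W) (h : G)
    (a : Dual ℂ W →ₗ[ℂ] Dual ℂ W)
    (ha : ∀ j₁ j₂ : J, (j₁ : G) * h * (j₂ : G) = h →
      lam.dual j₁ ∘ₗ a ∘ₗ lam.dual j₂ = a)
    (x : G) (j k : J) (hx : (j : G) * h * (k : G) = x) :
    stmt10_tf lam h a x = lam.dual j ∘ₗ a ∘ₗ lam.dual k := by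
  have hex : ∃ p : J × J, (p.1 : G) * h * (p.2 : G) = x := ⟨(j, k), hx⟩
  rw [stmt10_tf, dif_pos hex]
  have hp : (hex.choose.1 : G) * h * (hex.choose.2 : G) = x := hex.choose_spec
  set p := hex.choose with hpdef
  -- (p₁⁻¹ j) h (k p₂⁻¹) = h
  have hrel : ((p.1⁻¹ * j : J) : G) * h * ((k * p.2⁻¹ : J) : G) = h := by
    push_cast
    calc (p.1 : G)⁻¹ * (j : G) * h * ((k : G) * (p.2 : G)⁻¹)
        = (p.1 : G)⁻¹ * ((j : G) * h * (k : G)) * (p.2 : G)⁻¹ := by group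
      _ = (p.1 : G)⁻¹ * ((p.1 : G) * h * (p.2 : G)) * (p.2 : G)⁻¹ := by rw [hx, hp]
      _ = h := by group
  have hmid := ha _ _ hrel
  have := stmt10_conj lam (p.1⁻¹ * j) (k * p.2⁻¹) a a hmid p.1 p.2
  rw [mul_inv_cancel_left, inv_mul_cancel_right] at this
  exact this.symm

theorem stmt10_tf_equiv (lam : Representation ℂ J W) (h : G)
    (a : Dual ℂ W →ₗ[ℂ] Dual ℂ W)
    (ha : ∀ j₁ j₂ : J, (j₁ : G) * h * (j₂ : G) = h →
      lam.dual j₁ ∘ₗ a ∘ₗ lam.dual j₂ = a) :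
    ∀ (j₁ j₂ : J) (g : G),
      stmt10_tf lam h a ((j₁ : G) * g * (j₂ : G))
        = lam.dual j₁ ∘ₗ stmt10_tf lam h a g ∘ₗ lam.dual j₂ := by
  intro j₁ j₂ g
  by_cases hg : ∃ p : J × J, (p.1 : G) * h * (p.2 : G) = g
  · obtain ⟨p, hp⟩ := hg
    have h1 : stmt10_tf lam h a g = lam.dual p.1 ∘ₗ a ∘ₗ lam.dual p.2 :=
      stmt10_tf_spec lam h a ha g p.1 p.2 hp
    have h2 : ((j₁ * p.1 : J) : G) * h * ((p.2 * j₂ : J) : G) = (j₁ : G) * g * (j₂ : G) := by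
      push_cast
      rw [← hp]; group
    rw [stmt10_tf_spec lam h a ha _ (j₁ * p.1) (p.2 * j₂) h2, h1]
    exact stmt10_conj lam p.1 p.2 a _ rfl j₁ j₂
  · have h2 : ¬∃ p : J × J, (p.1 : G) * h * (p.2 : G) = (j₁ : G) * g * (j₂ : G) := by
      rintro ⟨p, hp⟩
      apply hg
      refine ⟨(j₁⁻¹ * p.1, p.2 * j₂⁻¹), ?_⟩
      push_cast
      calc (j₁ : G)⁻¹ * (p.1 : G) * h * ((p.2 : G) * (j₂ : G)⁻¹)
          = (j₁ : G)⁻¹ * ((p.1 : G) * h * (p.2 : G)) * (j₂ : G)⁻¹ := by group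
        _ = (j₁ : G)⁻¹ * ((j₁ : G) * g * (j₂ : G)) * (j₂ : G)⁻¹ := by rw [hp]
        _ = g := by group
    rw [stmt10_tf_zero lam h a _ h2, stmt10_tf_zero lam h a g hg]
    simp

end Stmt10Aux

set_option maxHeartbeats 1000000 in
/-- For `G` locally profinite, `J` a compact open subgroup, `λ` a smooth
finite-dimensional representation of `J`, and `(π, V)` a smooth irreducible
representation of `G` with `dim Hom_J(λ, V) = 1`, with associated Hecke character
`χ`, the eigenspace `_χH̄_λ = {Ψ ∈ H̄_λ : φ ⋆ Ψ = χ(φ)Ψ for all φ ∈ H_λ}` has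
dimension at most one: any two of its elements are proportional. -/
theorem stmt10 {G : Type} [Group G] [TopologicalSpace G] [IsTopologicalGroup G]
    (J : Subgroup G) (hJopen : IsOpen (J : Set G)) (hJcpt : IsCompact (J : Set G))
    {W : Type} [AddCommGroup W] [Module ℂ W] [FiniteDimensional ℂ W]
    (lam : Representation ℂ J W)
    (hlamsmooth : ∀ w : W, IsOpen {j : J | lam j w = w})
    {V : Type} [AddCommGroup V] [Module ℂ V] [Nontrivial V]
    (π : Representation ℂ G V)
    (hπsmooth : ∀ v : V, IsOpen {g : G | π g v = v})
    (hπirr : ∀ p : Submodule ℂ V, (∀ g : G, ∀ x ∈ p, π g x ∈ p) → p = ⊥ ∨ p = ⊤)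
    (hdim : Module.finrank ℂ (intertwiners lam π) = 1)
    (χ : (G → (Dual ℂ W →ₗ[ℂ] Dual ℂ W)) → ℂ)
    -- χ is the character through which the spherical Hecke algebra H_λ acts on
    -- the one-dimensional space Hom_J(λ, V):
    (hχ : ∀ φ : G → (Dual ℂ W →ₗ[ℂ] Dual ℂ W),
      (∀ (j₁ j₂ : J) (g : G),
        φ ((j₁ : G) * g * (j₂ : G)) = lam.dual j₁ ∘ₗ φ g ∘ₗ lam.dual j₂) →
      (Function.support (fun q : G ⧸ J => φ (Quotient.out q))).Finite →
      ∀ T ∈ intertwiners lam π, ∀ w : W,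
        (∑ᶠ q : G ⧸ J,
          π (Quotient.out q) (T (transp (φ ((Quotient.out q)⁻¹)) w))) = χ φ • T w) :
    ∀ Ψ₁ Ψ₂ : G → (Dual ℂ W →ₗ[ℂ] Dual ℂ W),
      (∀ (j₁ j₂ : J) (g : G),
        Ψ₁ ((j₁ : G) * g * (j₂ : G)) = lam.dual j₁ ∘ₗ Ψ₁ g ∘ₗ lam.dual j₂) →
      (∀ (j₁ j₂ : J) (g : G),
        Ψ₂ ((j₁ : G) * g * (j₂ : G)) = lam.dual j₁ ∘ₗ Ψ₂ g ∘ₗ lam.dual j₂) →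
      (∀ φ : G → (Dual ℂ W →ₗ[ℂ] Dual ℂ W),
        (∀ (j₁ j₂ : J) (g : G),
          φ ((j₁ : G) * g * (j₂ : G)) = lam.dual j₁ ∘ₗ φ g ∘ₗ lam.dual j₂) →
        (Function.support
          (fun q : Quotient (QuotientGroup.rightRel J) => φ (Quotient.out q))).Finite →
        ∀ g : G,
          (∑ᶠ q : Quotient (QuotientGroup.rightRel J),
            φ (g * (Quotient.out q)⁻¹) ∘ₗ Ψ₁ (Quotient.out q)) = χ φ • Ψ₁ g) →
      (∀ φ : G → (Dual ℂ W →ₗ[ℂ] Dual ℂ W),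
        (∀ (j₁ j₂ : J) (g : G),
          φ ((j₁ : G) * g * (j₂ : G)) = lam.dual j₁ ∘ₗ φ g ∘ₗ lam.dual j₂) →
        (Function.support
          (fun q : Quotient (QuotientGroup.rightRel J) => φ (Quotient.out q))).Finite →
        ∀ g : G,
          (∑ᶠ q : Quotient (QuotientGroup.rightRel J),
            φ (g * (Quotient.out q)⁻¹) ∘ₗ Ψ₂ (Quotient.out q)) = χ φ • Ψ₂ g) →
      ∃ a b : ℂ, (a ≠ 0 ∨ b ≠ 0) ∧ ∀ g : G, a • Ψ₁ g = b • Ψ₂ g := by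
  classical
  intro Ψ₁ Ψ₂ hE₁ hE₂ hΨ₁ hΨ₂
  set tr : (Dual ℂ W →ₗ[ℂ] Dual ℂ W) →ₗ[ℂ] ℂ := LinearMap.trace ℂ (Dual ℂ W) with htr
  have qfin : ∀ h : G, {r : Quotient (QuotientGroup.rightRel J) |
      ∃ p : J × J, (p.1 : G) * h * (p.2 : G) = Quotient.out r}.Finite :=
    fun h => stmt10_aux_qfin J hJopen hJcpt h
  -- cancellation facts for the dual representation
  have hdu1 : ∀ u : J, lam.dual u⁻¹ * lam.dual u = 1 := fun u => by
    rw [← map_mul, inv_mul_cancel, map_one]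
  have hdu2 : ∀ u : J, lam.dual u * lam.dual u⁻¹ = 1 := fun u => by
    rw [← map_mul, mul_inv_cancel, map_one]
  -- THE KEY TRACE IDENTITY
  have key : ∀ Ψ : G → (Dual ℂ W →ₗ[ℂ] Dual ℂ W),
      (∀ (j₁ j₂ : J) (g : G),
        Ψ ((j₁ : G) * g * (j₂ : G)) = lam.dual j₁ ∘ₗ Ψ g ∘ₗ lam.dual j₂) →
      (∀ φ : G → (Dual ℂ W →ₗ[ℂ] Dual ℂ W),
        (∀ (j₁ j₂ : J) (g : G),
          φ ((j₁ : G) * g * (j₂ : G)) = lam.dual j₁ ∘ₗ φ g ∘ₗ lam.dual j₂) →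
        (Function.support
          (fun q : Quotient (QuotientGroup.rightRel J) => φ (Quotient.out q))).Finite →
        ∀ g : G,
          (∑ᶠ q : Quotient (QuotientGroup.rightRel J),
            φ (g * (Quotient.out q)⁻¹) ∘ₗ Ψ (Quotient.out q)) = χ φ • Ψ g) →
      ∀ (h : G) (a : Dual ℂ W →ₗ[ℂ] Dual ℂ W),
        (∀ j₁ j₂ : J, (j₁ : G) * h * (j₂ : G) = h →
          lam.dual j₁ ∘ₗ a ∘ₗ lam.dual j₂ = a) →
        ((qfin h⁻¹).toFinset.card : ℂ) * tr (a ∘ₗ Ψ h⁻¹)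
          = χ (stmt10_tf lam h a) * tr (Ψ 1) := by
    intro Ψ hE hEig h a ha
    have hsupp1 : (Function.support
        (fun r : Quotient (QuotientGroup.rightRel J) =>
          stmt10_tf lam h a (Quotient.out r))).Finite := by
      apply (qfin h).subset
      intro r hr
      rw [Function.mem_support] at hr
      by_contra hnc
      exact hr (stmt10_tf_zero lam h a _ hnc)
    have heq := hEig (stmt10_tf lam h a) (stmt10_tf_equiv lam h a ha) hsupp1 1
    have hsupp2 : (Function.support fun r : Quotient (QuotientGroup.rightRel J) =>
        stmt10_tf lam h a (1 * (Quotient.out r)⁻¹) ∘ₗ Ψ (Quotient.out r))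
        ⊆ ↑(qfin h⁻¹).toFinset := by
      intro r hr
      rw [Function.mem_support] at hr
      rw [Set.Finite.coe_toFinset]
      by_contra hnc
      apply hr
      have hz : stmt10_tf lam h a (1 * (Quotient.out r)⁻¹) = 0 := by
        apply stmt10_tf_zero
        rintro ⟨p, hp⟩
        apply hnc
        refine ⟨(p.2⁻¹, p.1⁻¹), ?_⟩
        rw [one_mul] at hp
        have h2 := congrArg (·⁻¹) hp
        simp only [mul_inv_rev, inv_inv] at h2
        push_cast
        calc ((p.2 : G))⁻¹ * h⁻¹ * ((p.1 : G))⁻¹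
            = (p.2 : G)⁻¹ * ((p.1 : G) * h)⁻¹ := by group
          _ = Quotient.out r := by rw [← h2]; group
      rw [hz]
      simp
    rw [finsum_eq_sum_of_support_subset _ hsupp2] at heq
    have htreq := congrArg tr heq
    rw [map_sum, map_smul, smul_eq_mul] at htreq
    have hterm : ∀ r ∈ (qfin h⁻¹).toFinset,
        tr (stmt10_tf lam h a (1 * (Quotient.out r)⁻¹) ∘ₗ Ψ (Quotient.out r))
          = tr (a ∘ₗ Ψ h⁻¹) := by
      intro r hr
      rw [Set.Finite.mem_toFinset] at hr
      obtain ⟨p, hp⟩ := hr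
      have hinv : (1 : G) * (Quotient.out r)⁻¹
          = ((p.2⁻¹ : J) : G) * h * ((p.1⁻¹ : J) : G) := by
        rw [one_mul, ← hp]
        push_cast
        group
      rw [hinv, stmt10_tf_spec lam h a ha _ p.2⁻¹ p.1⁻¹ rfl, ← hp, hE p.1 p.2 h⁻¹]
      have hcan : ∀ y, lam.dual p.1⁻¹ (lam.dual p.1 y) = y := fun y => by
        rw [← Module.End.mul_apply, hdu1, Module.End.one_apply]
      have hcomp : (lam.dual p.2⁻¹ ∘ₗ a ∘ₗ lam.dual p.1⁻¹) ∘ₗ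
            (lam.dual p.1 ∘ₗ Ψ h⁻¹ ∘ₗ lam.dual p.2)
          = lam.dual p.2⁻¹ * ((a ∘ₗ Ψ h⁻¹) * lam.dual p.2) := by
        refine LinearMap.ext fun f => ?_
        simp only [LinearMap.comp_apply, Module.End.mul_apply, hcan]
      rw [hcomp, LinearMap.trace_mul_comm, mul_assoc, ← Module.End.mul_eq_comp]
      rw [hdu2, mul_one]
    rw [Finset.sum_congr rfl hterm, Finset.sum_const, nsmul_eq_mul] at htreq
    exact htreq
  -- THE AVERAGING / NONDEGENERACY LEMMA
  have avg : ∀ (h : G) (M : Dual ℂ W →ₗ[ℂ] Dual ℂ W),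
      (∀ i₁ i₂ : J, (i₁ : G) * h⁻¹ * (i₂ : G) = h⁻¹ →
        lam.dual i₁ ∘ₗ M ∘ₗ lam.dual i₂ = M) →
      (∀ a : Dual ℂ W →ₗ[ℂ] Dual ℂ W,
        (∀ j₁ j₂ : J, (j₁ : G) * h * (j₂ : G) = h →
          lam.dual j₁ ∘ₗ a ∘ₗ lam.dual j₂ = a) →
        tr (a ∘ₗ M) = 0) →
      M = 0 := by
    intro h M hMeq hMtr
    apply stmt10_aux_tracend
    intro c
    set P : Set (J × J) := {p | (p.1 : G) * h * (p.2 : G) = h} with hP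
    have hrfin := stmt10_aux_rangefin J hJcpt lam hlamsmooth
    have hΩfin : ((fun p : J × J => lam.dual p.1 ∘ₗ c ∘ₗ lam.dual p.2) '' P).Finite := by
      apply Set.Finite.subset
        ((hrfin.prod hrfin).image
          (fun pr : (Dual ℂ W →ₗ[ℂ] Dual ℂ W) × (Dual ℂ W →ₗ[ℂ] Dual ℂ W) =>
            pr.1 ∘ₗ c ∘ₗ pr.2))
      rintro - ⟨p, hp, rfl⟩
      exact ⟨(lam.dual p.1, lam.dual p.2), ⟨⟨p.1, rfl⟩, ⟨p.2, rfl⟩⟩, rfl⟩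
    have hcΩ : c ∈ (fun p : J × J => lam.dual p.1 ∘ₗ c ∘ₗ lam.dual p.2) '' P := by
      refine ⟨(1, 1), ?_, ?_⟩
      · simp [hP]
      · show lam.dual (1 : J) ∘ₗ c ∘ₗ lam.dual (1 : J) = c
        rw [map_one, Module.End.one_eq_id, LinearMap.id_comp, LinearMap.comp_id]
    set a : Dual ℂ W →ₗ[ℂ] Dual ℂ W := ∑ e ∈ hΩfin.toFinset, e with haa
    have hstab : ∀ (j₁ j₂ : J), (j₁ : G) * h * (j₂ : G) = h → ∀ p : J × J, p ∈ P →
        (j₁ * p.1, p.2 * j₂) ∈ P := by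
      intro j₁ j₂ hj p hp
      have hp' : (p.1 : G) * h * (p.2 : G) = h := hp
      show ((j₁ * p.1 : J) : G) * h * ((p.2 * j₂ : J) : G) = h
      push_cast
      calc (j₁ : G) * (p.1 : G) * h * ((p.2 : G) * (j₂ : G))
          = (j₁ : G) * ((p.1 : G) * h * (p.2 : G)) * (j₂ : G) := by group
        _ = (j₁ : G) * h * (j₂ : G) := by rw [hp']
        _ = h := hj
    have haAdm : ∀ j₁ j₂ : J, (j₁ : G) * h * (j₂ : G) = h →
        lam.dual j₁ ∘ₗ a ∘ₗ lam.dual j₂ = a := by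
      intro j₁ j₂ hj
      have hinvrel : (j₁⁻¹ : J) * h * ((j₂⁻¹ : J) : G) = h := by
        push_cast
        calc (j₁ : G)⁻¹ * h * (j₂ : G)⁻¹
            = (j₁ : G)⁻¹ * ((j₁ : G) * h * (j₂ : G)) * (j₂ : G)⁻¹ := by rw [hj]
          _ = h := by group
      simp only [← Module.End.mul_eq_comp, Finset.mul_sum, Finset.sum_mul, haa]
      refine Finset.sum_nbij' (fun e => lam.dual j₁ * e * lam.dual j₂)
        (fun e => lam.dual j₁⁻¹ * e * lam.dual j₂⁻¹) ?_ ?_ ?_ ?_ ?_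
      · intro e he
        rw [Set.Finite.mem_toFinset] at he ⊢
        obtain ⟨p, hp, rfl⟩ := he
        refine ⟨(j₁ * p.1, p.2 * j₂), hstab j₁ j₂ hj p hp, ?_⟩
        simp only [← Module.End.mul_eq_comp, map_mul, mul_assoc]
      · intro e he
        rw [Set.Finite.mem_toFinset] at he ⊢
        obtain ⟨p, hp, rfl⟩ := he
        refine ⟨(j₁⁻¹ * p.1, p.2 * j₂⁻¹), hstab j₁⁻¹ j₂⁻¹ hinvrel p hp, ?_⟩
        simp only [← Module.End.mul_eq_comp, map_mul, mul_assoc]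
      · intro e _
        simp only [mul_assoc]
        rw [hdu2, mul_one, ← mul_assoc, hdu1, one_mul]
      · intro e _
        simp only [mul_assoc]
        rw [hdu1, mul_one, ← mul_assoc, hdu2, one_mul]
      · intro e _
        rfl
    have h0 := hMtr a haAdm
    have hsum : tr (a ∘ₗ M) = (hΩfin.toFinset.card : ℂ) * tr (c ∘ₗ M) := by
      simp only [← Module.End.mul_eq_comp, haa, Finset.sum_mul, map_sum]
      have hterm : ∀ e ∈ hΩfin.toFinset, tr (e * M) = tr (c * M) := by
        intro e he
        rw [Set.Finite.mem_toFinset] at he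
        obtain ⟨p, hp, rfl⟩ := he
        have hp' : (p.1 : G) * h * (p.2 : G) = h := hp
        have hMinv : lam.dual p.2 ∘ₗ M ∘ₗ lam.dual p.1 = M := by
          apply hMeq
          calc (p.2 : G) * h⁻¹ * (p.1 : G)
              = (p.2 : G) * ((p.1 : G) * h * (p.2 : G))⁻¹ * (p.1 : G) := by rw [hp']
            _ = h⁻¹ := by group
        simp only [← Module.End.mul_eq_comp] at hMinv
        simp only [← Module.End.mul_eq_comp]
        calc tr (lam.dual p.1 * (c * lam.dual p.2) * M)
            = tr (lam.dual p.1 * (c * (lam.dual p.2 * M))) := by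
              simp only [mul_assoc]
          _ = tr ((c * (lam.dual p.2 * M)) * lam.dual p.1) := by
              rw [LinearMap.trace_mul_comm]
          _ = tr (c * (lam.dual p.2 * (M * lam.dual p.1))) := by
              simp only [mul_assoc]
          _ = tr (c * M) := by rw [hMinv]
      rw [Finset.sum_congr rfl hterm, Finset.sum_const, nsmul_eq_mul]
    rw [h0] at hsum
    have hcard : (hΩfin.toFinset.card : ℂ) ≠ 0 := by
      rw [Nat.cast_ne_zero]
      exact Finset.card_ne_zero_of_mem (hΩfin.mem_toFinset.mpr hcΩ)
    exact ((mul_eq_zero.mp hsum.symm).resolve_left hcard)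
  -- ASSEMBLY
  set c₁ : ℂ := tr (Ψ₁ 1) with hc₁
  set c₂ : ℂ := tr (Ψ₂ 1) with hc₂
  have hcardne : ∀ h : G, ((qfin h⁻¹).toFinset.card : ℂ) ≠ 0 := by
    intro h
    rw [Nat.cast_ne_zero]
    have hrel := Quotient.mk_out (s := QuotientGroup.rightRel J) h⁻¹
    have hj : h⁻¹ * (Quotient.out (Quotient.mk (QuotientGroup.rightRel J) h⁻¹))⁻¹ ∈ J :=
      QuotientGroup.rightRel_apply.mp hrel
    have hmem : (Quotient.mk (QuotientGroup.rightRel J) h⁻¹) ∈ (qfin h⁻¹).toFinset := by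
      rw [Set.Finite.mem_toFinset]
      refine ⟨(((⟨h⁻¹ * (Quotient.out (Quotient.mk (QuotientGroup.rightRel J) h⁻¹))⁻¹, hj⟩ :
        J))⁻¹, (1 : J)), ?_⟩
      push_cast
      group
    exact Finset.card_ne_zero_of_mem hmem
  -- equivariance of values
  have hval : ∀ (Ψ : G → (Dual ℂ W →ₗ[ℂ] Dual ℂ W)),
      (∀ (j₁ j₂ : J) (g : G),
        Ψ ((j₁ : G) * g * (j₂ : G)) = lam.dual j₁ ∘ₗ Ψ g ∘ₗ lam.dual j₂) →
      ∀ (h : G) (i₁ i₂ : J), (i₁ : G) * h⁻¹ * (i₂ : G) = h⁻¹ →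
        lam.dual i₁ ∘ₗ Ψ h⁻¹ ∘ₗ lam.dual i₂ = Ψ h⁻¹ := by
    intro Ψ hE h i₁ i₂ hi
    rw [← hE i₁ i₂ h⁻¹, hi]
  by_cases hc : c₁ = 0 ∧ c₂ = 0
  · have hz : ∀ (Ψ : G → (Dual ℂ W →ₗ[ℂ] Dual ℂ W)),
        (∀ (j₁ j₂ : J) (g : G),
          Ψ ((j₁ : G) * g * (j₂ : G)) = lam.dual j₁ ∘ₗ Ψ g ∘ₗ lam.dual j₂) →
        (∀ φ : G → (Dual ℂ W →ₗ[ℂ] Dual ℂ W),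
          (∀ (j₁ j₂ : J) (g : G),
            φ ((j₁ : G) * g * (j₂ : G)) = lam.dual j₁ ∘ₗ φ g ∘ₗ lam.dual j₂) →
          (Function.support
            (fun q : Quotient (QuotientGroup.rightRel J) => φ (Quotient.out q))).Finite →
          ∀ g : G,
            (∑ᶠ q : Quotient (QuotientGroup.rightRel J),
              φ (g * (Quotient.out q)⁻¹) ∘ₗ Ψ (Quotient.out q)) = χ φ • Ψ g) →
        tr (Ψ 1) = 0 → ∀ g : G, Ψ g = 0 := by
      intro Ψ hE hEig htr0 g
      have := avg g⁻¹ (Ψ (g⁻¹)⁻¹) (hval Ψ hE g⁻¹) ?_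
      · rwa [inv_inv] at this
      · intro a ha
        have hk := key Ψ hE hEig g⁻¹ a ha
        rw [htr0, mul_zero] at hk
        exact ((mul_eq_zero.mp hk).resolve_left (hcardne g⁻¹))
    refine ⟨1, 1, Or.inl one_ne_zero, fun g => ?_⟩
    rw [hz Ψ₁ hE₁ hΨ₁ hc.1 g, hz Ψ₂ hE₂ hΨ₂ hc.2 g]
  · refine ⟨c₂, c₁, ?_, ?_⟩
    · rcases not_and_or.mp hc with h1 | h2
      · exact Or.inr h1
      · exact Or.inl h2
    · intro g
      have hM0 : c₂ • Ψ₁ (g⁻¹)⁻¹ - c₁ • Ψ₂ (g⁻¹)⁻¹ = 0 := by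
        apply avg g⁻¹ _ ?_ ?_
        · intro i₁ i₂ hi
          have e₁ := hval Ψ₁ hE₁ g⁻¹ i₁ i₂ hi
          have e₂ := hval Ψ₂ hE₂ g⁻¹ i₁ i₂ hi
          have hdist : lam.dual i₁ ∘ₗ (c₂ • Ψ₁ (g⁻¹)⁻¹ - c₁ • Ψ₂ (g⁻¹)⁻¹) ∘ₗ lam.dual i₂
              = c₂ • (lam.dual i₁ ∘ₗ Ψ₁ (g⁻¹)⁻¹ ∘ₗ lam.dual i₂)
                - c₁ • (lam.dual i₁ ∘ₗ Ψ₂ (g⁻¹)⁻¹ ∘ₗ lam.dual i₂) := by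
            refine LinearMap.ext fun f => ?_
            simp only [LinearMap.comp_apply, LinearMap.sub_apply, LinearMap.smul_apply,
              map_sub, map_smul]
          rw [hdist, e₁, e₂]
        · intro a ha
          have k₁ := key Ψ₁ hE₁ hΨ₁ g⁻¹ a ha
          have k₂ := key Ψ₂ hE₂ hΨ₂ g⁻¹ a ha
          have hexp : a ∘ₗ (c₂ • Ψ₁ (g⁻¹)⁻¹ - c₁ • Ψ₂ (g⁻¹)⁻¹)
              = c₂ • (a ∘ₗ Ψ₁ (g⁻¹)⁻¹) - c₁ • (a ∘ₗ Ψ₂ (g⁻¹)⁻¹) := by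
            simp only [← Module.End.mul_eq_comp]
            rw [mul_sub, Algebra.mul_smul_comm, Algebra.mul_smul_comm]
          rw [hexp, map_sub, map_smul, map_smul, smul_eq_mul, smul_eq_mul]
          have hmul : ((qfin (g⁻¹)⁻¹).toFinset.card : ℂ)
              * (c₂ * tr (a ∘ₗ Ψ₁ (g⁻¹)⁻¹) - c₁ * tr (a ∘ₗ Ψ₂ (g⁻¹)⁻¹)) = 0 := by
            rw [mul_sub]
            rw [show ((qfin (g⁻¹)⁻¹).toFinset.card : ℂ) * (c₂ * tr (a ∘ₗ Ψ₁ (g⁻¹)⁻¹))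
              = c₂ * (((qfin (g⁻¹)⁻¹).toFinset.card : ℂ) * tr (a ∘ₗ Ψ₁ (g⁻¹)⁻¹)) by ring]
            rw [show ((qfin (g⁻¹)⁻¹).toFinset.card : ℂ) * (c₁ * tr (a ∘ₗ Ψ₂ (g⁻¹)⁻¹))
              = c₁ * (((qfin (g⁻¹)⁻¹).toFinset.card : ℂ) * tr (a ∘ₗ Ψ₂ (g⁻¹)⁻¹)) by ring]
            rw [k₁, k₂]
            ring
          exact ((mul_eq_zero.mp hmul).resolve_left (hcardne g⁻¹))
      have := sub_eq_zero.mp hM0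
      rwa [inv_inv] at this
end

section
/- Let G be a group, J ≤ G, and (λ, W) a representation of J. Let Ψ : G → End(W̃) satisfy Ψ(j₁gj₂) = λ̃(j₁)Ψ(g)λ̃(j₂). Fix w ∈ W and define f_w ∈ ind_J^G λ as the function supported on J with f_w(j) = λ(j)w. Then for any Λ : G → W̃ with Λ(jg) = λ̃(j)Λ(g), the pairing Σ_{x ∈ J\G} ⟨f_w(xg), Λ(x)⟩ equals ⟨w, Λ(g⁻¹)⟩ for all g ∈ G; in particular, if Λ = Λ_{Ψ,w̃} (i.e., Λ(x) = Ψ(x)(w̃)), the matrix-coefficient function g ↦ Σ_{x∈J\G}⟨f_w(xg), Λ(x)⟩ equals g ↦ ⟨w, Ψ(g⁻¹)(w̃)⟩. -/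
open Module

/-- With `f_w ∈ ind_J^G λ` the function supported on `J` with
`f_w(j) = λ(j)w`, and `Λ : G → W̃` left `J`-equivariant, the pairing
`Σ_{x ∈ J\G} ⟨f_w(xg), Λ(x)⟩` equals `⟨w, Λ(g⁻¹)⟩`; in particular for
`Λ = Λ_{Ψ,wd}` with `Ψ ∈ H̄_λ`, the matrix coefficient equals
`g ↦ ⟨w, Ψ(g⁻¹)(wd)⟩`. -/
theorem stmt19 {G : Type} [Group G] (J : Subgroup G) [DecidablePred (· ∈ J)]
    {W : Type} [AddCommGroup W] [Module ℂ W] [FiniteDimensional ℂ W]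
    (lam : Representation ℂ J W) (w : W)
    (fw : G → W)
    (hfw : fw = fun g => if h : g ∈ J then lam ⟨g, h⟩ w else 0) :
    (∀ Λ : G → Dual ℂ W,
      (∀ (j : J) (g : G), Λ ((j : G) * g) = lam.dual j (Λ g)) →
      ∀ g : G,
        (∑ᶠ q : Quotient (QuotientGroup.rightRel J),
          Λ (Quotient.out q) (fw (Quotient.out q * g))) = Λ g⁻¹ w) ∧
    (∀ Ψ : G → (Dual ℂ W →ₗ[ℂ] Dual ℂ W),
      (∀ (j₁ j₂ : J) (g : G),
        Ψ ((j₁ : G) * g * (j₂ : G)) = lam.dual j₁ ∘ₗ Ψ g ∘ₗ lam.dual j₂) →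
      ∀ (wd : Dual ℂ W) (g : G),
        (∑ᶠ q : Quotient (QuotientGroup.rightRel J),
          (Ψ (Quotient.out q) wd) (fw (Quotient.out q * g))) = (Ψ g⁻¹ wd) w) := by
  have main : ∀ Λ : G → Dual ℂ W,
      (∀ (j : J) (g : G), Λ ((j : G) * g) = lam.dual j (Λ g)) →
      ∀ g : G,
        (∑ᶠ q : Quotient (QuotientGroup.rightRel J),
          Λ (Quotient.out q) (fw (Quotient.out q * g))) = Λ g⁻¹ w := by
    intro Λ hΛ g
    set q0 : Quotient (QuotientGroup.rightRel J) := Quotient.mk _ g⁻¹ with hq0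
    have hrel : (QuotientGroup.rightRel J) (Quotient.out q0) g⁻¹ :=
      Quotient.mk_out (s := QuotientGroup.rightRel J) g⁻¹
    have hmem : Quotient.out q0 * g ∈ J := by
      have h1 : g⁻¹ * (Quotient.out q0)⁻¹ ∈ J :=
        (QuotientGroup.rightRel_apply).mp hrel
      have := J.inv_mem h1
      simpa using this
    rw [finsum_eq_single _ q0]
    · set j : J := ⟨Quotient.out q0 * g, hmem⟩ with hj
      have hout : Quotient.out q0 = (j : G) * g⁻¹ := by
        simp [hj]
      have hfw' : fw (Quotient.out q0 * g) = lam j w := by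
        rw [hfw]; simp [hmem]; rfl
      rw [hfw', hout, hΛ j g⁻¹]
      show ((Λ g⁻¹) ∘ₗ lam j⁻¹) ((lam j) w) = (Λ g⁻¹) w
      rw [LinearMap.comp_apply, ← Module.End.mul_apply, ← map_mul, inv_mul_cancel, map_one,
        Module.End.one_apply]
    · intro q hq
      have hnot : Quotient.out q * g ∉ J := by
        intro hmem'
        apply hq
        have : (QuotientGroup.rightRel J) (Quotient.out q) g⁻¹ := by
          rw [QuotientGroup.rightRel_apply]
          have := J.inv_mem hmem'
          simpa using this
        have := Quotient.sound (s := QuotientGroup.rightRel J) this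
        rw [Quotient.out_eq q] at this
        exact this
      have : fw (Quotient.out q * g) = 0 := by rw [hfw]; simp [hnot]
      rw [this]; simp
  refine ⟨main, ?_⟩
  intro Ψ hΨ wd g
  have hΛ : ∀ (j : J) (x : G), Ψ ((j : G) * x) wd = lam.dual j (Ψ x wd) := by
    intro j x
    have := hΨ j 1 x
    rw [map_one] at this
    simpa using LinearMap.congr_fun this wd
  exact main (fun x => Ψ x wd) hΛ g
end
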